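/- Let 0 < ε ≤ 1/2 and let k be an integer with k ≥ 10 + 2(1−ε)/ε. Let t > 0 be defined by (1/√(2π)) ∫_t^∞ e^{-z²/2} dz = 2^{-k-2}. Then (1/8) · Pr[Z > sqrt(ε/(1−ε)) · t] ≥ 0.003 (εk)^{-1/2} · 2^{-εk/(1−ε)}, where Z is a standard Gaussian random variable. -/

import Mathlib

/-- The upper-tail probability of a standard Gaussian:
`Pr[Z > s] = (1/√(2π)) ∫_s^∞ e^{-z²/2} dz`. -/
noncomputable def gaussTail (s : ℝ) : ℝ :=
  (Real.sqrt (2 * Real.pi))⁻¹ * ∫ z in Set.Ioi s, Real.exp (-z ^ 2 / 2)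

open MeasureTheory Set Real

lemma g_int : Integrable (fun z : ℝ => Real.exp (-z ^ 2 / 2)) := by
  have h := integrable_exp_neg_mul_sq (by norm_num : (0:ℝ) < 1/2)
  convert h using 2 with x
  ring_nf

lemma g_nonneg (z : ℝ) : 0 ≤ Real.exp (-z ^ 2 / 2) := (Real.exp_pos _).le

lemma half_gauss : ∫ z in Ioi (0:ℝ), Real.exp (-z ^ 2 / 2) = Real.sqrt (2 * π) / 2 := by
  have h := integral_gaussian_Ioi (1/2)
  have : ∀ x : ℝ, Real.exp (-(1/2) * x ^ 2) = Real.exp (-x ^ 2 / 2) := by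
    intro x; ring_nf
  simp_rw [this] at h
  rw [h]
  rw [show π / (1/2) = 2 * π by ring]

lemma tail_shift (t : ℝ) :
    ∫ z in Ioi t, Real.exp (-(z - t) ^ 2 / 2) = Real.sqrt (2 * π) / 2 := by
  rw [← half_gauss]
  have h1 : ∫ z in Ioi t, Real.exp (-(z - t) ^ 2 / 2)
      = ∫ z, (Ioi (0:ℝ)).indicator (fun u => Real.exp (-u ^ 2 / 2)) (z - t) := by
    rw [← integral_indicator measurableSet_Ioi]
    congr 1
    ext z
    by_cases hz : z ∈ Ioi t
    · rw [indicator_of_mem hz]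
      have : z - t ∈ Ioi (0:ℝ) := by simp [mem_Ioi] at hz ⊢; linarith [hz]
      rw [indicator_of_mem this]
    · rw [indicator_of_notMem hz]
      have : z - t ∉ Ioi (0:ℝ) := by simp [mem_Ioi] at hz ⊢; linarith [hz]
      rw [indicator_of_notMem this]
  rw [h1, integral_sub_right_eq_self _ t, integral_indicator measurableSet_Ioi]

lemma tail_upper {t : ℝ} (ht : 0 ≤ t) :
    ∫ z in Ioi t, Real.exp (-z ^ 2 / 2) ≤ Real.sqrt (2 * π) / 2 * Real.exp (-t ^ 2 / 2) := by
  have key : ∀ z ∈ Ioi t, Real.exp (-z ^ 2 / 2) ≤ Real.exp (-t ^ 2 / 2) * Real.exp (-(z - t) ^ 2 / 2) := by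
    intro z hz
    rw [← Real.exp_add]
    apply Real.exp_le_exp.mpr
    have hz' : t ≤ z := le_of_lt hz
    nlinarith
  calc ∫ z in Ioi t, Real.exp (-z ^ 2 / 2)
      ≤ ∫ z in Ioi t, Real.exp (-t ^ 2 / 2) * Real.exp (-(z - t) ^ 2 / 2) := by
        apply setIntegral_mono_on (g_int.integrableOn)
        · apply Integrable.integrableOn
          apply Integrable.const_mul
          have h := integrable_exp_neg_mul_sq (by norm_num : (0:ℝ) < 1/2)
          have h2 := h.comp_sub_right t
          convert h2 using 2 with x
          ring_nf
        · exact measurableSet_Ioi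
        · exact key
    _ = Real.exp (-t ^ 2 / 2) * ∫ z in Ioi t, Real.exp (-(z - t) ^ 2 / 2) := integral_const_mul _ _
    _ = Real.exp (-t ^ 2 / 2) * (Real.sqrt (2 * π) / 2) := by rw [tail_shift]
    _ = Real.sqrt (2 * π) / 2 * Real.exp (-t ^ 2 / 2) := by ring

lemma tail_lower {s : ℝ} (hs : 1 ≤ s) :
    3 / (4 * s) * Real.exp (-(33/32)) * Real.exp (-s ^ 2 / 2)
      ≤ ∫ z in Ioi s, Real.exp (-z ^ 2 / 2) := by
  have hs0 : 0 < s := lt_of_lt_of_le one_pos hs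
  obtain ⟨b, hb⟩ : ∃ b, b = s + 3 / (4 * s) := ⟨_, rfl⟩
  have hsb : s < b := by
    have : 0 < 3 / (4 * s) := by positivity
    rw [hb]; linarith
  have step1 : ∫ z in Ioc s b, Real.exp (-z ^ 2 / 2) ≤ ∫ z in Ioi s, Real.exp (-z ^ 2 / 2) := by
    apply setIntegral_mono_set g_int.integrableOn
    · exact Filter.Eventually.of_forall (fun z => g_nonneg z)
    · exact HasSubset.Subset.eventuallyLE Ioc_subset_Ioi_self
  have step2 : ∫ z in Ioc s b, Real.exp (-b ^ 2 / 2) ≤ ∫ z in Ioc s b, Real.exp (-z ^ 2 / 2) := by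
    apply setIntegral_mono_on (integrableOn_const measure_Ioc_lt_top.ne)
      g_int.integrableOn measurableSet_Ioc
    intro z hz
    apply Real.exp_le_exp.mpr
    have h1 : s < z := hz.1
    have h2 : z ≤ b := hz.2
    have hz0 : (0:ℝ) ≤ z := by linarith
    have : z ^ 2 ≤ b ^ 2 := by nlinarith
    linarith
  have step3 : ∫ z in Ioc s b, Real.exp (-b ^ 2 / 2) = (b - s) * Real.exp (-b ^ 2 / 2) := by
    rw [setIntegral_const, measureReal_def, Real.volume_Ioc, ENNReal.toReal_ofReal (by linarith)]
    rw [smul_eq_mul]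
  have step4 : 3 / (4 * s) * Real.exp (-(33/32)) * Real.exp (-s ^ 2 / 2)
      ≤ (b - s) * Real.exp (-b ^ 2 / 2) := by
    have hbs : b - s = 3 / (4 * s) := by rw [hb]; ring
    rw [hbs]
    have key : Real.exp (-(33/32)) * Real.exp (-s ^ 2 / 2) ≤ Real.exp (-b ^ 2 / 2) := by
      rw [← Real.exp_add]
      apply Real.exp_le_exp.mpr
      have hb2 : b ^ 2 = s ^ 2 + 3 / 2 + 9 / (16 * s ^ 2) := by
        rw [hb]; field_simp; ring
      have hss : 9 / (16 * s ^ 2) ≤ 9 / 16 := by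
        apply div_le_div_of_nonneg_left (by norm_num) (by norm_num)
        nlinarith
      rw [hb2]; linarith
    calc 3 / (4 * s) * Real.exp (-(33/32)) * Real.exp (-s ^ 2 / 2)
        = 3 / (4 * s) * (Real.exp (-(33/32)) * Real.exp (-s ^ 2 / 2)) := by ring
      _ ≤ 3 / (4 * s) * Real.exp (-b ^ 2 / 2) :=
          mul_le_mul_of_nonneg_left key (by positivity)
  linarith

lemma exp_neg_3332 : (0.356 : ℝ) ≤ Real.exp (-(33/32)) := by
  have h1 : Real.exp 1 < 2.7182818286 := Real.exp_one_lt_d9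
  have h2 : (1:ℝ) - 1/32 ≤ Real.exp (-(1/32)) := by
    have := Real.add_one_le_exp (-(1/32) : ℝ); linarith
  have h3 : Real.exp ((1:ℝ)/32) ≤ 32/31 := by
    have hp : (0:ℝ) < 31/32 := by norm_num
    have : Real.exp ((1:ℝ)/32) = (Real.exp (-(1/32)))⁻¹ := by
      rw [← Real.exp_neg]; norm_num
    rw [this]
    rw [show (32:ℝ)/31 = ((31:ℝ)/32)⁻¹ by norm_num]
    apply inv_anti₀ hp
    linarith
  have h4 : Real.exp ((33:ℝ)/32) = Real.exp 1 * Real.exp (1/32) := by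
    rw [← Real.exp_add]; norm_num
  have h5 : Real.exp ((33:ℝ)/32) ≤ 2.7182818286 * (32/31) := by
    rw [h4]
    apply mul_le_mul h1.le h3 (Real.exp_pos _).le (by norm_num)
  rw [show (-(33/32) : ℝ) = -(33/32) from rfl, Real.exp_neg]
  rw [show (0.356:ℝ) = (1/0.356)⁻¹ by norm_num]
  apply inv_anti₀ (Real.exp_pos _)
  calc Real.exp ((33:ℝ)/32) ≤ 2.7182818286 * (32/31) := h5
    _ ≤ 1/0.356 := by norm_num

lemma gaussTail_anti : Antitone gaussTail := by
  intro a c hac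
  unfold gaussTail
  apply mul_le_mul_of_nonneg_left _ (by positivity)
  apply setIntegral_mono_set g_int.integrableOn
  · exact Filter.Eventually.of_forall (fun z => g_nonneg z)
  · exact HasSubset.Subset.eventuallyLE (Ioi_subset_Ioi hac)

lemma two_pow_eq_exp (n : ℕ) : ((2:ℝ))^n = Real.exp ((n:ℝ) * Real.log 2) := by
  rw [show ((n:ℝ) * Real.log 2) = (n:ℕ) * Real.log 2 by push_cast; ring,
    Real.exp_nat_mul, Real.exp_log (by norm_num : (0:ℝ) < 2)]

lemma sqrt_two_pi_le : Real.sqrt (2 * π) ≤ 2.5067 := by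
  rw [show (2.5067:ℝ) = Real.sqrt (2.5067^2) from (Real.sqrt_sq (by norm_num)).symm]
  apply Real.sqrt_le_sqrt
  nlinarith [Real.pi_lt_d6]

lemma sqrt_two_pi_ge : (2:ℝ) ≤ Real.sqrt (2 * π) := by
  rw [Real.le_sqrt (by norm_num) (by positivity)]
  nlinarith [Real.pi_gt_d6]

set_option maxHeartbeats 2000000 in
theorem stmt12 (ε : ℝ) (k : ℕ) (t : ℝ) (hε0 : 0 < ε) (hε1 : ε ≤ 1 / 2)
    (hk : (10 : ℝ) + 2 * (1 - ε) / ε ≤ (k : ℝ)) (ht : 0 < t)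
    (htail : gaussTail t = 1 / 2 ^ (k + 2)) :
    (1 / 8) * gaussTail (Real.sqrt (ε / (1 - ε)) * t) ≥
      0.003 / Real.sqrt (ε * k) * (2 : ℝ) ^ (-(ε * (k : ℝ)) / (1 - ε)) := by
  have h1ε : (0:ℝ) < 1 - ε := by linarith
  have hεε : ε ≤ 1 - ε := by linarith
  have hl2 : (0.6931471803:ℝ) < Real.log 2 := Real.log_two_gt_d9
  have hl2' : Real.log 2 < 0.6931471808 := Real.log_two_lt_d9
  have hsp : (0:ℝ) < Real.sqrt (2*π) := lt_of_lt_of_le two_pos sqrt_two_pi_ge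
  obtain ⟨y, hy_def⟩ : ∃ y, y = (1 - ε) / ε := ⟨_, rfl⟩
  have hy1 : (1:ℝ) ≤ y := by rw [hy_def, le_div_iff₀ hε0]; linarith
  have hky : (10:ℝ) + 2 * y ≤ (k:ℝ) := by
    rw [hy_def]; rw [show 2 * ((1-ε)/ε) = 2 * (1-ε) / ε by ring]; exact hk
  have hεy : ε * y = 1 - ε := by rw [hy_def]; field_simp
  have hεk : (2:ℝ) ≤ ε * k := by nlinarith [mul_le_mul_of_nonneg_left hky hε0.le]
  -- integral value at t
  have hIt : ∫ z in Ioi t, Real.exp (-z ^ 2 / 2) = Real.sqrt (2*π) / 2 ^ (k+2) := by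
    unfold gaussTail at htail
    field_simp at htail ⊢
    linarith [htail]
  -- upper bound on t^2
  have hE1 : Real.exp (-(((k:ℝ)+1) * Real.log 2)) ≤ Real.exp (-t ^ 2 / 2) := by
    have hu := tail_upper ht.le
    rw [hIt] at hu
    have h2 : Real.sqrt (2*π) / 2 ^ (k+2) = Real.sqrt (2*π) / 2 * (2 / 2^(k+2)) := by
      field_simp
    have h3 : (2:ℝ) / 2^(k+2) ≤ Real.exp (-t ^ 2 / 2) := by
      rw [h2] at hu
      have := (mul_le_mul_iff_right₀ (by positivity : (0:ℝ) < Real.sqrt (2*π) / 2)).mp hu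
      exact this
    have h4 : (2:ℝ) / 2^(k+2) = Real.exp (-(((k:ℝ)+1) * Real.log 2)) := by
      rw [Real.exp_neg, show ((k:ℝ)+1) = (((k+1):ℕ):ℝ) by push_cast; ring,
        ← two_pow_eq_exp]
      rw [eq_comm, inv_eq_one_div, div_eq_div_iff (by positivity) (by positivity)]
      rw [show k + 2 = (k+1) + 1 by ring, pow_succ]
      ring
    linarith [h4 ▸ h3]
  have ht2 : t ^ 2 ≤ 2 * ((k:ℝ)+1) * Real.log 2 := by
    have := Real.exp_le_exp.mp hE1
    linarith
  -- lower bound on t^2 : y ≤ t^2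
  have hty : y ≤ t ^ 2 := by
    by_contra hcon
    push_neg at hcon
    obtain ⟨x, hx_def⟩ : ∃ x, x = Real.sqrt y := ⟨_, rfl⟩
    have hy0 : (0:ℝ) ≤ y := by linarith
    have hx1 : (1:ℝ) ≤ x := by
      rw [hx_def, Real.le_sqrt (by norm_num) hy0]; linarith
    have hx0 : (0:ℝ) < x := lt_of_lt_of_le one_pos hx1
    have hx2 : x ^ 2 = y := by rw [hx_def]; exact Real.sq_sqrt hy0
    have htx : t ≤ x := by nlinarith
    have hanti : gaussTail x ≤ gaussTail t := gaussTail_anti htx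
    -- show gaussTail x > 1 / 2^(k+2)
    have hQx : (1:ℝ) / 2 ^ (k+2) < gaussTail x := by
      have hlow := tail_lower hx1
      have hQx1 : (Real.sqrt (2*π))⁻¹ * (3 / (4*x) * Real.exp (-(33/32)) * Real.exp (-x ^ 2 / 2))
          ≤ gaussTail x := by
        unfold gaussTail
        apply mul_le_mul_of_nonneg_left hlow (by positivity)
      -- chain of exponential bounds
      have c1 : (1:ℝ) / 2^(k+2) ≤ Real.exp (-((12 + 2*y) * Real.log 2)) := by
        rw [show (1:ℝ)/2^(k+2) = (2^(k+2):ℝ)⁻¹ by ring, show ((2:ℝ))^(k+2) =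
          Real.exp ((((k+2):ℕ):ℝ) * Real.log 2) from two_pow_eq_exp (k+2), ← Real.exp_neg]
        apply Real.exp_le_exp.mpr
        have : (12:ℝ) + 2*y ≤ ((k:ℝ)+2) := by linarith
        push_cast
        nlinarith
      have c2 : Real.exp (-((12 + 2*y) * Real.log 2)) ≤ (1/4096) * Real.exp (-y) := by
        rw [show -((12 + 2*y) * Real.log 2) = -((12:ℝ) * Real.log 2) + -(2 * Real.log 2 * y) by ring,
          Real.exp_add]
        apply mul_le_mul
        · rw [Real.exp_neg, show (12:ℝ) * Real.log 2 = (((12):ℕ):ℝ) * Real.log 2 by norm_num,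
            ← two_pow_eq_exp]
          norm_num
        · apply Real.exp_le_exp.mpr; nlinarith
        · positivity
        · norm_num
      have c3 : Real.exp (-y) ≤ (1/x) * Real.exp (-y/2) := by
        have hxe : x ≤ Real.exp (y/2) := by
          rw [hx_def]
          have h1 : y ≤ Real.exp y := by linarith [Real.add_one_le_exp y]
          have h2 : Real.exp y = (Real.exp (y/2))^2 := by
            rw [sq, ← Real.exp_add]; norm_num
          have := Real.sqrt_le_sqrt h1
          rwa [h2, Real.sqrt_sq (Real.exp_pos _).le] at this
        have : Real.exp (-(y/2)) ≤ 1/x := by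
          rw [Real.exp_neg]
          rw [show (1:ℝ)/x = x⁻¹ by ring]
          exact inv_anti₀ hx0 hxe
        calc Real.exp (-y) = Real.exp (-(y/2)) * Real.exp (-y/2) := by
              rw [← Real.exp_add]; ring_nf
          _ ≤ (1/x) * Real.exp (-y/2) :=
              mul_le_mul_of_nonneg_right this (Real.exp_pos _).le
      have c4 : (1/4096 : ℝ) * ((1/x) * Real.exp (-y/2))
          < (Real.sqrt (2*π))⁻¹ * (3 / (4*x) * Real.exp (-(33/32)) * Real.exp (-x ^ 2 / 2)) := by
        rw [hx2]
        have hsle : (1:ℝ)/3 ≤ (Real.sqrt (2*π))⁻¹ := by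
          rw [show (1:ℝ)/3 = ((3:ℝ))⁻¹ by norm_num]
          apply inv_anti₀ hsp
          linarith [sqrt_two_pi_le]
        have he33 := exp_neg_3332
        have hEy : (0:ℝ) < Real.exp (-y/2) := Real.exp_pos _
        have h3x : (0:ℝ) ≤ 3 / (4*x) := by positivity
        calc (1/4096 : ℝ) * ((1/x) * Real.exp (-y/2))
            = (1/4096) / x * Real.exp (-y/2) := by ring
          _ < (89/1000) / x * Real.exp (-y/2) := by
              apply mul_lt_mul_of_pos_right _ hEy
              exact (div_lt_div_iff_of_pos_right hx0).mpr (by norm_num)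
          _ = (1/3) * (3/(4*x) * (89/250) * Real.exp (-y/2)) := by
              field_simp
              ring
          _ ≤ (Real.sqrt (2*π))⁻¹ * (3 / (4*x) * Real.exp (-(33/32)) * Real.exp (-y/2)) := by
              apply mul_le_mul hsle ?_ (by positivity) (by positivity)
              apply mul_le_mul_of_nonneg_right ?_ hEy.le
              apply mul_le_mul_of_nonneg_left ?_ h3x
              have : (89:ℝ)/250 = (0.356:ℝ) := by norm_num
              rw [this]
              exact he33
      calc (1:ℝ)/2^(k+2) ≤ Real.exp (-((12 + 2*y) * Real.log 2)) := c1
        _ ≤ (1/4096) * Real.exp (-y) := c2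
        _ ≤ (1/4096) * ((1/x) * Real.exp (-y/2)) := by
            apply mul_le_mul_of_nonneg_left c3 (by norm_num)
        _ < _ := c4
        _ ≤ gaussTail x := hQx1
    linarith [htail ▸ hanti]
  -- Step C: main estimate
  obtain ⟨A, hA_def⟩ : ∃ A, A = ε / (1 - ε) := ⟨_, rfl⟩
  have hA0 : 0 < A := by rw [hA_def]; positivity
  have hA1 : A ≤ 1 := by rw [hA_def, div_le_one h1ε]; linarith
  have hAy : A * y = 1 := by rw [hA_def, hy_def]; field_simp
  have hL0 : (0:ℝ) < Real.log 2 := by linarith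
  rw [ge_iff_le]
  unfold gaussTail
  rw [← hA_def]
  obtain ⟨s, hs_def⟩ : ∃ s, s = Real.sqrt A * t := ⟨_, rfl⟩
  rw [← hs_def]
  obtain ⟨u, hu_def⟩ : ∃ u, u = Real.sqrt (ε * k) := ⟨_, rfl⟩
  rw [← hu_def]
  have hs0 : 0 < s := by
    rw [hs_def]; exact mul_pos (Real.sqrt_pos.mpr hA0) ht
  have hsq : s ^ 2 = A * t ^ 2 := by
    rw [hs_def, mul_pow, Real.sq_sqrt hA0.le]
  have hs1 : (1:ℝ) ≤ s := by
    have h1 : A * y ≤ A * t ^ 2 := mul_le_mul_of_nonneg_left hty hA0.le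
    nlinarith
  have hεk0 : (0:ℝ) < ε * k := by linarith
  have hu0 : 0 < u := by rw [hu_def]; exact Real.sqrt_pos.mpr hεk0
  have hu2 : u ^ 2 = ε * k := by rw [hu_def]; exact Real.sq_sqrt hεk0.le
  -- upper bound on s
  have hs_up : s ≤ (9309/5000) * u := by
    have hA2 : A ≤ 2 * ε := by rw [hA_def, div_le_iff₀ h1ε]; nlinarith
    have hAt : A * t ^ 2 ≤ (2*ε) * (2*((k:ℝ)+1)*Real.log 2) := by
      apply mul_le_mul hA2 ht2 (by positivity) (by positivity)
    have h4ε : 4 * ε ≤ ε * k := by nlinarith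
    have hs2' : s ^ 2 ≤ (9309/5000)^2 * u ^ 2 := by
      rw [hsq, hu2]
      calc A * t ^ 2 ≤ (2*ε) * (2*((k:ℝ)+1)*Real.log 2) := hAt
        _ = 4*Real.log 2*(ε*k) + 4*Real.log 2*ε := by ring
        _ ≤ 4*Real.log 2*(ε*k) + Real.log 2*(ε*k) := by nlinarith
        _ = 5*Real.log 2*(ε*k) := by ring
        _ ≤ (9309/5000)^2 * (ε*k) := by nlinarith
    nlinarith [sq_nonneg (s - 9309/5000 * u), mul_pos hs0 hu0]
  -- lower bound on exp(-s^2/2)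
  have hP_def : (2:ℝ) ^ (-(ε * (k:ℝ)) / (1 - ε)) = Real.exp (-(A * (k:ℝ)) * Real.log 2) := by
    rw [Real.rpow_def_of_pos (by norm_num : (0:ℝ) < 2)]
    rw [show Real.log 2 * (-(ε * (k:ℝ)) / (1 - ε)) = -(A * (k:ℝ)) * Real.log 2 by
      rw [hA_def]; ring]
  have hP0 : (0:ℝ) < (2:ℝ) ^ (-(ε * (k:ℝ)) / (1 - ε)) :=
    Real.rpow_pos_of_pos (by norm_num) _
  have hEs : (1/2) * (2:ℝ) ^ (-(ε * (k:ℝ)) / (1 - ε)) ≤ Real.exp (-s ^ 2 / 2) := by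
    rw [hP_def]
    have h1 : Real.exp (-(A*((k:ℝ)+1) * Real.log 2)) ≤ Real.exp (-s ^ 2 / 2) := by
      apply Real.exp_le_exp.mpr
      have := mul_le_mul_of_nonneg_left ht2 hA0.le
      rw [hsq] at *
      nlinarith
    have h2 : Real.exp (-(A*((k:ℝ)+1) * Real.log 2))
        = Real.exp (-(A*(k:ℝ)) * Real.log 2) * Real.exp (-(A * Real.log 2)) := by
      rw [← Real.exp_add]; ring_nf
    have h3 : (1:ℝ)/2 ≤ Real.exp (-(A * Real.log 2)) := by
      have ha : Real.exp (-(Real.log 2)) ≤ Real.exp (-(A * Real.log 2)) := by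
        apply Real.exp_le_exp.mpr; nlinarith
      have h4 : Real.exp (-(Real.log 2)) = 1/2 := by
        rw [Real.exp_neg, Real.exp_log (by norm_num : (0:ℝ) < 2)]; norm_num
      linarith
    calc (1/2) * Real.exp (-(A*(k:ℝ)) * Real.log 2)
        ≤ Real.exp (-(A*(k:ℝ)) * Real.log 2) * Real.exp (-(A * Real.log 2)) := by
          nlinarith [Real.exp_pos (-(A*(k:ℝ)) * Real.log 2)]
      _ = Real.exp (-(A*((k:ℝ)+1) * Real.log 2)) := h2.symm
      _ ≤ Real.exp (-s ^ 2 / 2) := h1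
  -- assemble
  have hIs := tail_lower hs1
  have hv : Real.sqrt (2*π) ≤ 25067/10000 := by
    have := sqrt_two_pi_le; norm_num at this ⊢; linarith
  have step : 3/(4*((9309/5000)*u)) * (89/250) * ((1/2) * (2:ℝ) ^ (-(ε * (k:ℝ)) / (1 - ε)))
      ≤ ∫ z in Ioi s, Real.exp (-z ^ 2 / 2) := by
    refine le_trans ?_ hIs
    have f1 : 3/(4*((9309/5000)*u)) ≤ 3/(4*s) :=
      div_le_div_of_nonneg_left (by norm_num) (by positivity) (by nlinarith)
    have f2 : (89:ℝ)/250 ≤ Real.exp (-(33/32)) := by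
      have := exp_neg_3332; norm_num at this ⊢; linarith
    apply mul_le_mul (mul_le_mul f1 f2 (by norm_num) (by positivity)) hEs
      (by positivity) (by positivity)
  calc 0.003 / u * (2:ℝ) ^ (-(ε * (k:ℝ)) / (1 - ε))
      = 0.003 * u⁻¹ * (2:ℝ) ^ (-(ε * (k:ℝ)) / (1 - ε)) := by ring
    _ ≤ (1/8)*((25067/10000:ℝ)⁻¹*((3*(5000/(4*9309)))*(89/250)*(1/2))) * u⁻¹
          * (2:ℝ) ^ (-(ε * (k:ℝ)) / (1 - ε)) := by
        apply mul_le_mul_of_nonneg_right _ hP0.le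
        apply mul_le_mul_of_nonneg_right _ (inv_nonneg.mpr hu0.le)
        norm_num
    _ = (1/8)*((25067/10000:ℝ)⁻¹*(3/(4*((9309/5000)*u)) * (89/250)
          * ((1/2) * (2:ℝ) ^ (-(ε * (k:ℝ)) / (1 - ε))))) := by
        have hfrac : 3/(4*((9309/5000:ℝ)*u)) = (3*(5000/(4*9309))) * u⁻¹ := by
          field_simp
        rw [hfrac]; ring
    _ ≤ (1/8)*((Real.sqrt (2*π))⁻¹*(3/(4*((9309/5000)*u)) * (89/250)
          * ((1/2) * (2:ℝ) ^ (-(ε * (k:ℝ)) / (1 - ε))))) := by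
        apply mul_le_mul_of_nonneg_left _ (by norm_num)
        apply mul_le_mul_of_nonneg_right (inv_anti₀ hsp hv) (by positivity)
    _ ≤ (1/8)*((Real.sqrt (2*π))⁻¹ * ∫ z in Ioi s, Real.exp (-z ^ 2 / 2)) := by
        apply mul_le_mul_of_nonneg_left _ (by norm_num)
        apply mul_le_mul_of_nonneg_left step (by positivity)
    _ = 1/8 * ((Real.sqrt (2*π))⁻¹ * ∫ z in Ioi s, Real.exp (-z ^ 2 / 2)) := by ring
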